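/- arXiv:2507.06635 — 4 statements merged into one kernel-verified Lean document; each statement's English description precedes it below -/
import Mathlib

section
/- Let c ∈ {1,…,N−W+1} with w ≤ c and c+W−1 ≤ N, and let x = (x_z) be a vector with x_z ∈ [0,1] for z ∈ {1,…,N+w−1} and x_z = 0 for z ∉ {1,…,N+w−1}. Then for every z with c ≤ z ≤ c+W−1, the partial derivative of the window potential satisfies ∂U(x;ε,c)/∂x_z = ρ'(1−x_z) · ( x_z − (1/w)∑_{k=0}^{w−1} ε λ(1 − (1/w)∑_{j=0}^{w−1} ρ(1 − x_{z+j−k})) ) = ρ'(1−x_z)·(x_z − f(z,x;c,w,W,ε)). -/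
open Finset

noncomputable section

namespace SC

/-- λ(x) = L'(x)/L'(1). -/
def lam (L : Polynomial ℝ) (x : ℝ) : ℝ :=
  (Polynomial.derivative L).eval x / (Polynomial.derivative L).eval 1

/-- ρ(x) = R'(x)/R'(1). -/
def rho (R : Polynomial ℝ) (x : ℝ) : ℝ :=
  (Polynomial.derivative R).eval x / (Polynomial.derivative R).eval 1

/-- ρ'(x) = R''(x)/R'(1). -/
def rhoD (R : Polynomial ℝ) (x : ℝ) : ℝ :=
  (Polynomial.derivative (Polynomial.derivative R)).eval x / (Polynomial.derivative R).eval 1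

/-- ε_z = ε for 1 ≤ z ≤ N, 0 otherwise. -/
def epsAt (ε : ℝ) (N : ℕ) (z : ℤ) : ℝ := if 1 ≤ z ∧ z ≤ (N : ℤ) then ε else 0

/-- Windowed DE update f(z, x; c, w, W, ε). -/
def deUpdate (L R : Polynomial ℝ) (ε : ℝ) (N w W : ℕ) (c : ℤ) (x : ℤ → ℝ) (z : ℤ) : ℝ :=
  if c ≤ z ∧ z ≤ c + (W : ℤ) - 1 then
    (1 / (w : ℝ)) * ∑ k ∈ Finset.range w, epsAt ε N (z - (k : ℤ)) *
      lam L (1 - (1 / (w : ℝ)) * ∑ j ∈ Finset.range w, rho R (1 - x (z + (j : ℤ) - (k : ℤ))))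
  else x z

/-- Window potential U(x; ε, c). -/
def windowU (L R : Polynomial ℝ) (ε : ℝ) (w W : ℕ) (c : ℤ) (x : ℤ → ℝ) : ℝ :=
  ∑ z ∈ Finset.Icc (c - ((w : ℤ) - 1)) (c + (W : ℤ) - 1),
    ((1 / (Polynomial.derivative R).eval 1) * (1 - R.eval (1 - x z))
      - x z * rho R (1 - x z)
      - (ε / (Polynomial.derivative L).eval 1) *
          L.eval (1 - (1 / (w : ℝ)) * ∑ j ∈ Finset.range w, rho R (1 - x (z + (j : ℤ)))))

/-- Single-system potential U(x; ε). -/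
def singleU (L R : Polynomial ℝ) (ε : ℝ) (x : ℝ) : ℝ :=
  (1 / (Polynomial.derivative R).eval 1) * (1 - R.eval (1 - x))
    - x * rho R (1 - x)
    - (ε / (Polynomial.derivative L).eval 1) * L.eval (1 - rho R (1 - x))

/-- the partial derivative of the window potential with respect to the
coordinate `x_z` (for `z` inside the window, away from the boundary) equals
`ρ'(1−x_z)·(x_z − f(z,x;c,w,W,ε))`. -/
theorem windowU_partial_deriv
    (L R : Polynomial ℝ)
    (hLcoeff : ∀ i, 0 ≤ L.coeff i) (hRcoeff : ∀ i, 0 ≤ R.coeff i)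
    (hL1 : L.eval 1 = 1) (hR1 : R.eval 1 = 1)
    (hL'pos : 0 < (Polynomial.derivative L).eval 1)
    (hR'pos : 0 < (Polynomial.derivative R).eval 1)
    (ε : ℝ) (hε0 : 0 ≤ ε) (hε1 : ε ≤ 1)
    (N w W : ℕ) (hw : 1 ≤ w) (hwW : w ≤ W) (hWN : W ≤ N)
    (c : ℕ) (hc1 : w ≤ c) (hc2 : c + W ≤ N + 1)
    (x : ℤ → ℝ)
    (hxin : ∀ z : ℤ, 1 ≤ z → z ≤ (N : ℤ) + (w : ℤ) - 1 → x z ∈ Set.Icc (0 : ℝ) 1)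
    (hxout : ∀ z : ℤ, ¬ (1 ≤ z ∧ z ≤ (N : ℤ) + (w : ℤ) - 1) → x z = 0)
    (z : ℤ) (hz1 : (c : ℤ) ≤ z) (hz2 : z ≤ (c : ℤ) + (W : ℤ) - 1) :
    HasDerivAt (fun s : ℝ => windowU L R ε w W (c : ℤ) (Function.update x z s))
      (rhoD R (1 - x z) *
        (x z - (1 / (w : ℝ)) * ∑ k ∈ Finset.range w,
          ε * lam L (1 - (1 / (w : ℝ)) *
            ∑ j ∈ Finset.range w, rho R (1 - x (z + (j : ℤ) - (k : ℤ))))))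
      (x z) ∧
    rhoD R (1 - x z) *
        (x z - (1 / (w : ℝ)) * ∑ k ∈ Finset.range w,
          ε * lam L (1 - (1 / (w : ℝ)) *
            ∑ j ∈ Finset.range w, rho R (1 - x (z + (j : ℤ) - (k : ℤ)))))
      = rhoD R (1 - x z) * (x z - deUpdate L R ε N w W (c : ℤ) x z) := by
  have hRne : (Polynomial.derivative R).eval 1 ≠ 0 := ne_of_gt hR'pos
  have hLne : (Polynomial.derivative L).eval 1 ≠ 0 := ne_of_gt hL'pos
  have hwne : (w : ℝ) ≠ 0 := Nat.cast_ne_zero.mpr (by omega)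
  -- derivative of s ↦ ρ(1 - s)
  have hrhoD : ∀ a : ℝ, HasDerivAt (fun s : ℝ => rho R (1 - s)) (-(rhoD R (1 - a))) a := by
    intro a
    have h1 : HasDerivAt (fun s : ℝ => 1 - s) (-1) a := (hasDerivAt_id a).const_sub 1
    have h2 : HasDerivAt (fun s : ℝ => rho R (1 - s))
        ((Polynomial.derivative (Polynomial.derivative R)).eval (1 - a) * (-1) /
          (Polynomial.derivative R).eval 1) a :=
      ((Polynomial.hasDerivAt (Polynomial.derivative R) (1 - a)).comp a h1).div_const _
    convert h2 using 1
    unfold rhoD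
    ring
  -- derivative of the inner coupling sum
  have hS : ∀ y : ℤ, HasDerivAt
      (fun s => ∑ j ∈ Finset.range w, rho R (1 - Function.update x z s (y + (j : ℤ))))
      (if y ∈ Finset.Ioc (z - (w : ℤ)) z then -(rhoD R (1 - x z)) else 0) (x z) := by
    intro y
    have key : ∀ j ∈ Finset.range w, HasDerivAt
        (fun s => rho R (1 - Function.update x z s (y + (j : ℤ))))
        (if y + (j : ℤ) = z then -(rhoD R (1 - x z)) else 0) (x z) := by
      intro j _
      by_cases hj : y + (j : ℤ) = z
      · rw [if_pos hj, hj]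
        simp only [Function.update_self]
        exact hrhoD (x z)
      · rw [if_neg hj]
        simp only [Function.update_of_ne hj]
        exact hasDerivAt_const _ _
    have h := HasDerivAt.fun_sum key
    refine h.congr_deriv (Eq.symm ?_)
    by_cases hy : y ∈ Finset.Ioc (z - (w : ℤ)) z
    · have hy' := Finset.mem_Ioc.mp hy
      rw [if_pos hy, Finset.sum_eq_single_of_mem (z - y).toNat
        (Finset.mem_range.mpr (by omega)), if_pos (by omega)]
      intro j _ hne
      exact if_neg (fun hc => hne (by omega))
    · have hy' : ¬ (z - (w : ℤ) < y ∧ y ≤ z) := by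
        simpa [Finset.mem_Ioc] using hy
      rw [if_neg hy]
      refine (Finset.sum_eq_zero ?_).symm
      intro j hj
      have hj' := Finset.mem_range.mp hj
      exact if_neg (by omega)
  -- derivative of each summand of the window potential
  have hF : ∀ y ∈ Finset.Icc ((c : ℤ) - ((w : ℤ) - 1)) ((c : ℤ) + (W : ℤ) - 1),
      HasDerivAt (fun s : ℝ =>
        (1 / (Polynomial.derivative R).eval 1) * (1 - R.eval (1 - Function.update x z s y))
          - Function.update x z s y * rho R (1 - Function.update x z s y)
          - (ε / (Polynomial.derivative L).eval 1) *
              L.eval (1 - (1 / (w : ℝ)) *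
                ∑ j ∈ Finset.range w, rho R (1 - Function.update x z s (y + (j : ℤ)))))
        ((if y = z then x z * rhoD R (1 - x z) else 0)
          - (if y ∈ Finset.Ioc (z - (w : ℤ)) z then
              ε / (w : ℝ) * lam L (1 - (1 / (w : ℝ)) *
                ∑ j ∈ Finset.range w, rho R (1 - x (y + (j : ℤ)))) * rhoD R (1 - x z)
            else 0)) (x z) := by
    intro y _
    have hinner : HasDerivAt
        (fun s => 1 - (1 / (w : ℝ)) *
          ∑ j ∈ Finset.range w, rho R (1 - Function.update x z s (y + (j : ℤ))))
        (-((1 / (w : ℝ)) *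
          (if y ∈ Finset.Ioc (z - (w : ℤ)) z then -(rhoD R (1 - x z)) else 0))) (x z) :=
      ((hS y).const_mul (1 / (w : ℝ))).const_sub 1
    have hA3 : HasDerivAt
        (fun s => (ε / (Polynomial.derivative L).eval 1) *
          L.eval (1 - (1 / (w : ℝ)) *
            ∑ j ∈ Finset.range w, rho R (1 - Function.update x z s (y + (j : ℤ)))))
        ((ε / (Polynomial.derivative L).eval 1) *
          ((Polynomial.derivative L).eval (1 - (1 / (w : ℝ)) *
              ∑ j ∈ Finset.range w, rho R (1 - x (y + (j : ℤ)))) *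
            (-((1 / (w : ℝ)) *
              (if y ∈ Finset.Ioc (z - (w : ℤ)) z then -(rhoD R (1 - x z)) else 0))))) (x z) := by
      have h := ((Polynomial.hasDerivAt L _).comp (x z) hinner).const_mul
        (ε / (Polynomial.derivative L).eval 1)
      simp only [Function.comp_def, Function.update_eq_self] at h
      exact h
    by_cases hyz : y = z
    · subst hyz
      have hmem : y ∈ Finset.Ioc (y - (w : ℤ)) y := Finset.mem_Ioc.mpr ⟨by omega, le_refl _⟩
      have hA1 : HasDerivAt
          (fun s : ℝ => (1 / (Polynomial.derivative R).eval 1) * (1 - R.eval (1 - s)))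
          ((1 / (Polynomial.derivative R).eval 1) *
            (-((Polynomial.derivative R).eval (1 - x y) * (-1)))) (x y) := by
        have h1 : HasDerivAt (fun s : ℝ => 1 - s) (-1) (x y) := (hasDerivAt_id _).const_sub 1
        exact (((Polynomial.hasDerivAt R (1 - x y)).comp (x y) h1).const_sub 1).const_mul _
      have hA2 : HasDerivAt (fun s : ℝ => s * rho R (1 - s))
          (1 * rho R (1 - x y) + x y * -(rhoD R (1 - x y))) (x y) :=
        (hasDerivAt_id (x y)).mul (hrhoD (x y))
      have h := (hA1.fun_sub hA2).fun_sub hA3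
      simp only [Function.update_self]
      rw [if_pos hmem]
      refine h.congr_deriv (Eq.symm ?_)
      rw [if_pos hmem, if_pos trivial]
      unfold lam rho rhoD
      field_simp
      ring
    · have h := ((hasDerivAt_const (x z)
        ((1 / (Polynomial.derivative R).eval 1) * (1 - R.eval (1 - x y)))).fun_sub
        (hasDerivAt_const (x z) (x y * rho R (1 - x y)))).fun_sub hA3
      simp only [Function.update_of_ne hyz]
      refine h.congr_deriv (Eq.symm ?_)
      rw [if_neg hyz]
      split_ifs with h1
      · unfold lam rho rhoD
        field_simp
        ring
      · ring
  -- the total derivative value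
  have hzmem : z ∈ Finset.Icc ((c : ℤ) - ((w : ℤ) - 1)) ((c : ℤ) + (W : ℤ) - 1) :=
    Finset.mem_Icc.mpr ⟨by omega, by omega⟩
  have hsub : Finset.Ioc (z - (w : ℤ)) z ⊆
      Finset.Icc ((c : ℤ) - ((w : ℤ) - 1)) ((c : ℤ) + (W : ℤ) - 1) := by
    intro t ht
    have ht' := Finset.mem_Ioc.mp ht
    exact Finset.mem_Icc.mpr ⟨by omega, by omega⟩
  have hmap : Finset.Ioc (z - (w : ℤ)) z =
      (Finset.range w).map ⟨fun k : ℕ => z - (k : ℤ), fun a b h => by have h' : z - (a : ℤ) = z - (b : ℤ) := h; omega⟩ := by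
    ext t
    simp only [Finset.mem_Ioc, Finset.mem_map, Finset.mem_range, Function.Embedding.coeFn_mk]
    dsimp only [DFunLike.coe]
    constructor
    · rintro ⟨h1, h2⟩
      exact ⟨(z - t).toNat, by omega, by omega⟩
    · rintro ⟨k, hk, rfl⟩
      omega
  have hval : (∑ y ∈ Finset.Icc ((c : ℤ) - ((w : ℤ) - 1)) ((c : ℤ) + (W : ℤ) - 1),
      ((if y = z then x z * rhoD R (1 - x z) else 0)
        - (if y ∈ Finset.Ioc (z - (w : ℤ)) z then
            ε / (w : ℝ) * lam L (1 - (1 / (w : ℝ)) *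
              ∑ j ∈ Finset.range w, rho R (1 - x (y + (j : ℤ)))) * rhoD R (1 - x z)
          else 0)))
      = rhoD R (1 - x z) *
        (x z - (1 / (w : ℝ)) * ∑ k ∈ Finset.range w,
          ε * lam L (1 - (1 / (w : ℝ)) *
            ∑ j ∈ Finset.range w, rho R (1 - x (z + (j : ℤ) - (k : ℤ))))) := by
    rw [Finset.sum_sub_distrib, Finset.sum_ite_eq' _ z _, if_pos hzmem,
      Finset.sum_ite_mem, Finset.inter_eq_right.mpr hsub, hmap, Finset.sum_map]
    dsimp only [DFunLike.coe]
    simp only [Function.Embedding.coeFn_mk, sub_add_eq_add_sub]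
    rw [mul_sub, Finset.mul_sum, Finset.mul_sum]
    congr 1
    · exact mul_comm _ _
    · exact Finset.sum_congr rfl fun k _ => by ring
  constructor
  · have h := HasDerivAt.fun_sum hF
    rw [hval] at h
    exact h
  · have hde : deUpdate L R ε N w W (c : ℤ) x z
        = (1 / (w : ℝ)) * ∑ k ∈ Finset.range w,
            ε * lam L (1 - (1 / (w : ℝ)) *
              ∑ j ∈ Finset.range w, rho R (1 - x (z + (j : ℤ) - (k : ℤ)))) := by
      unfold deUpdate
      rw [if_pos ⟨hz1, hz2⟩]
      congr 1
      refine Finset.sum_congr rfl fun k hk => ?_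
      have hk' := Finset.mem_range.mp hk
      congr 1
      unfold epsAt
      rw [if_pos ⟨by omega, by omega⟩]
    rw [hde]

end SC
end
end

section
/- Let c ∈ {1,…,N−W+1} with w ≤ c and c+W−1 ≤ N, and let x = (x_z) be a vector with x_z ∈ [0,1] for z ∈ {1,…,N+w−1} and x_z = 0 for z ∉ {1,…,N+w−1}. Assume ρ'(1−x_z) ≠ 0 for every z ∈ {c,…,c+W−1}. Then x is a fixed point of the windowed DE update, i.e. x_z = f(z,x;c,w,W,ε) for all z ∈ {c,…,c+W−1}, if and only if x is a stationary point of the window potential restricted to the window coordinates, i.e. ∂U(x;ε,c)/∂x_z = 0 for all z ∈ {c,…,c+W−1}. -/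
open Finset

noncomputable section

namespace SC

lemma hasDerivAt_update (x : ℤ → ℝ) (z0 zz : ℤ) (s : ℝ) :
    HasDerivAt (fun t : ℝ => Function.update x z0 t zz) (if zz = z0 then 1 else 0) s := by
  rcases eq_or_ne zz z0 with h | h
  · subst h
    simp only [Function.update_self, if_pos rfl]
    exact hasDerivAt_id s
  · simp only [Function.update_of_ne h, if_neg h]
    exact hasDerivAt_const s (x zz)

lemma hasDerivAt_rho_update (R : Polynomial ℝ) (x : ℤ → ℝ) (z0 zz : ℤ) :
    HasDerivAt (fun s : ℝ => rho R (1 - Function.update x z0 s zz))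
      (-(rhoD R (1 - x zz)) * (if zz = z0 then 1 else 0)) (x z0) := by
  have h1 : HasDerivAt (fun s : ℝ => 1 - Function.update x z0 s zz)
      (-(if zz = z0 then (1:ℝ) else 0)) (x z0) :=
    (hasDerivAt_update x z0 zz (x z0)).const_sub 1
  have h2 := ((Polynomial.derivative R).hasDerivAt
      (1 - Function.update x z0 (x z0) zz)).comp (x z0) h1
  have h3 := h2.div_const ((Polynomial.derivative R).eval 1)
  simp only [Function.update_eq_self] at h3
  refine h3.congr_deriv ?_
  simp only [rhoD]; ring

lemma hasDerivAt_term (L R : Polynomial ℝ) (ε : ℝ) (w : ℕ) (x : ℤ → ℝ) (z0 z : ℤ) :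
    HasDerivAt (fun s : ℝ =>
      (1 / (Polynomial.derivative R).eval 1) * (1 - R.eval (1 - Function.update x z0 s z))
        - Function.update x z0 s z * rho R (1 - Function.update x z0 s z)
        - (ε / (Polynomial.derivative L).eval 1) *
            L.eval (1 - (1 / (w : ℝ)) *
              ∑ j ∈ Finset.range w, rho R (1 - Function.update x z0 s (z + (j : ℤ)))))
      ((if z = z0 then x z0 * rhoD R (1 - x z0) else 0)
        - (ε / (Polynomial.derivative L).eval 1) *
            ((Polynomial.derivative L).eval
                (1 - (1 / (w : ℝ)) * ∑ j ∈ Finset.range w, rho R (1 - x (z + (j : ℤ)))) *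
              (-((1 / (w : ℝ)) * ∑ j ∈ Finset.range w,
                  -(rhoD R (1 - x (z + (j : ℤ)))) * (if z + (j : ℤ) = z0 then 1 else 0)))))
      (x z0) := by
  have hS : HasDerivAt
      (fun s : ℝ => ∑ j ∈ Finset.range w, rho R (1 - Function.update x z0 s (z + (j : ℤ))))
      (∑ j ∈ Finset.range w, -(rhoD R (1 - x (z + (j : ℤ)))) * (if z + (j : ℤ) = z0 then 1 else 0))
      (x z0) :=
    HasDerivAt.fun_sum (fun j _ => hasDerivAt_rho_update R x z0 (z + (j : ℤ)))
  have hArg := (hS.const_mul (1 / (w : ℝ))).const_sub 1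
  have hL := (L.hasDerivAt (1 - (1 / (w : ℝ)) *
      ∑ j ∈ Finset.range w, rho R (1 - Function.update x z0 (x z0) (z + (j : ℤ))))).comp (x z0) hArg
  simp only [Function.update_eq_self] at hL
  have hB := hL.const_mul (ε / (Polynomial.derivative L).eval 1)
  have hA : HasDerivAt (fun s : ℝ =>
      (1 / (Polynomial.derivative R).eval 1) * (1 - R.eval (1 - Function.update x z0 s z))
        - Function.update x z0 s z * rho R (1 - Function.update x z0 s z))
      (if z = z0 then x z0 * rhoD R (1 - x z0) else 0) (x z0) := by
    rcases eq_or_ne z z0 with h | h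
    · subst h
      rw [if_pos rfl]
      have h1 : HasDerivAt (fun s : ℝ => 1 - s) (-(1 : ℝ)) (x z) :=
        (hasDerivAt_id (x z)).const_sub 1
      have h2 := (R.hasDerivAt (1 - x z)).comp (x z) h1
      have h4 := (h2.const_sub 1).const_mul (1 / (Polynomial.derivative R).eval 1)
      have h5 := (((Polynomial.derivative R).hasDerivAt (1 - x z)).comp (x z) h1).div_const
        ((Polynomial.derivative R).eval 1)
      have h6 := (hasDerivAt_id (x z)).mul h5
      have h7 := h4.sub h6
      have heq : (fun s : ℝ =>
          (1 / (Polynomial.derivative R).eval 1) * (1 - R.eval (1 - Function.update x z s z))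
            - Function.update x z s z * rho R (1 - Function.update x z s z)) =
          (fun s : ℝ =>
          (1 / (Polynomial.derivative R).eval 1) * (1 - ((fun y => R.eval y) ∘ fun s : ℝ => 1 - s) s)
            - id s * (((fun y => (Polynomial.derivative R).eval y) ∘ fun s : ℝ => 1 - s) s /
                (Polynomial.derivative R).eval 1)) := by
        funext s
        simp [Function.update_self, rho, Function.comp]
      rw [heq]
      refine h7.congr_deriv ?_
      simp only [rhoD, id, Function.comp_apply]
      ring
    · have hc : (fun s : ℝ =>
          (1 / (Polynomial.derivative R).eval 1) * (1 - R.eval (1 - Function.update x z0 s z))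
            - Function.update x z0 s z * rho R (1 - Function.update x z0 s z)) =
          (fun _ : ℝ =>
          (1 / (Polynomial.derivative R).eval 1) * (1 - R.eval (1 - x z))
            - x z * rho R (1 - x z)) := by
        funext s; simp [Function.update_of_ne h]
      rw [hc, if_neg h]
      exact hasDerivAt_const _ _
  exact hA.sub hB

lemma hasDerivAt_windowU (L R : Polynomial ℝ) (ε : ℝ) (N w W : ℕ) (c : ℤ)
    (hw : 1 ≤ w) (hc1 : (w : ℤ) ≤ c) (hc2 : c + (W : ℤ) - 1 ≤ (N : ℤ))
    (x : ℤ → ℝ) (z0 : ℤ) (h1 : c ≤ z0) (h2 : z0 ≤ c + (W : ℤ) - 1) :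
    HasDerivAt (fun s : ℝ => windowU L R ε w W c (Function.update x z0 s))
      (rhoD R (1 - x z0) * (x z0 - deUpdate L R ε N w W c x z0)) (x z0) := by
  have H := HasDerivAt.fun_sum (u := Finset.Icc (c - ((w : ℤ) - 1)) (c + (W : ℤ) - 1))
      (fun z _ => hasDerivAt_term L R ε w x z0 z)
  have hmem : z0 ∈ Finset.Icc (c - ((w : ℤ) - 1)) (c + (W : ℤ) - 1) := by
    rw [Finset.mem_Icc]; omega
  have inner_eq : ∀ z : ℤ,
      (∑ j ∈ Finset.range w,
        -(rhoD R (1 - x (z + (j : ℤ)))) * (if z + (j : ℤ) = z0 then 1 else 0))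
      = if z ∈ Finset.Icc (z0 - (w : ℤ) + 1) z0 then -(rhoD R (1 - x z0)) else 0 := by
    intro z
    by_cases h : z ∈ Finset.Icc (z0 - (w : ℤ) + 1) z0
    · rw [if_pos h]
      rw [Finset.mem_Icc] at h
      rw [Finset.sum_eq_single_of_mem ((z0 - z).toNat)]
      · have hz : z + (((z0 - z).toNat : ℤ)) = z0 := by omega
        rw [hz, if_pos rfl, mul_one]
      · rw [Finset.mem_range]; omega
      · intro b hb hne
        rw [Finset.mem_range] at hb
        have : ¬ (z + (b : ℤ) = z0) := by omega
        rw [if_neg this, mul_zero]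
    · rw [if_neg h]
      rw [Finset.mem_Icc] at h
      push_neg at h
      refine Finset.sum_eq_zero fun j hj => ?_
      rw [Finset.mem_range] at hj
      have : ¬ (z + (j : ℤ) = z0) := by omega
      rw [if_neg this, mul_zero]
  have hsum : (∑ z ∈ Finset.Icc (c - ((w : ℤ) - 1)) (c + (W : ℤ) - 1),
      ((if z = z0 then x z0 * rhoD R (1 - x z0) else 0)
        - (ε / (Polynomial.derivative L).eval 1) *
            ((Polynomial.derivative L).eval
                (1 - (1 / (w : ℝ)) * ∑ j ∈ Finset.range w, rho R (1 - x (z + (j : ℤ)))) *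
              (-((1 / (w : ℝ)) * ∑ j ∈ Finset.range w,
                  -(rhoD R (1 - x (z + (j : ℤ)))) * (if z + (j : ℤ) = z0 then 1 else 0))))))
      = rhoD R (1 - x z0) * (x z0 - deUpdate L R ε N w W c x z0) := by
    rw [Finset.sum_sub_distrib,
      Finset.sum_ite_eq' _ z0 (fun _ => x z0 * rhoD R (1 - x z0)), if_pos hmem]
    have hsummand : ∀ z ∈ Finset.Icc (c - ((w : ℤ) - 1)) (c + (W : ℤ) - 1),
        (ε / (Polynomial.derivative L).eval 1) *
            ((Polynomial.derivative L).eval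
                (1 - (1 / (w : ℝ)) * ∑ j ∈ Finset.range w, rho R (1 - x (z + (j : ℤ)))) *
              (-((1 / (w : ℝ)) * ∑ j ∈ Finset.range w,
                  -(rhoD R (1 - x (z + (j : ℤ)))) * (if z + (j : ℤ) = z0 then 1 else 0))))
        = if z ∈ Finset.Icc (z0 - (w : ℤ) + 1) z0 then
            (ε / (Polynomial.derivative L).eval 1) *
              (Polynomial.derivative L).eval
                (1 - (1 / (w : ℝ)) * ∑ j ∈ Finset.range w, rho R (1 - x (z + (j : ℤ)))) *
              ((1 / (w : ℝ)) * rhoD R (1 - x z0))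
          else 0 := by
      intro z _
      rw [inner_eq z]
      split <;> ring
    rw [Finset.sum_congr rfl hsummand, Finset.sum_ite_mem,
      Finset.inter_eq_right.mpr (Finset.Icc_subset_Icc (by omega) (by omega))]
    have himg : Finset.Icc (z0 - (w : ℤ) + 1) z0
        = (Finset.range w).image (fun k : ℕ => z0 - (k : ℤ)) := by
      ext t
      simp only [Finset.mem_Icc, Finset.mem_image, Finset.mem_range]
      constructor
      · intro ht; exact ⟨(z0 - t).toNat, by omega, by omega⟩
      · rintro ⟨k, hk, rfl⟩; omega
    rw [himg, Finset.sum_image (by intro a _ b _ hab; dsimp only at hab; omega)]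
    rw [deUpdate, if_pos ⟨h1, h2⟩]
    have hde : ∀ k ∈ Finset.range w,
        epsAt ε N (z0 - (k : ℤ)) * lam L (1 - (1 / (w : ℝ)) *
          ∑ j ∈ Finset.range w, rho R (1 - x (z0 + (j : ℤ) - (k : ℤ))))
        = ε * ((Polynomial.derivative L).eval (1 - (1 / (w : ℝ)) *
            ∑ j ∈ Finset.range w, rho R (1 - x (z0 - (k : ℤ) + (j : ℤ))))
            / (Polynomial.derivative L).eval 1) := by
      intro k hk
      rw [Finset.mem_range] at hk
      rw [epsAt, if_pos ⟨by omega, by omega⟩, lam]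
      have harg : ∀ j : ℕ, z0 + (j : ℤ) - (k : ℤ) = z0 - (k : ℤ) + (j : ℤ) := fun j => by ring
      simp only [harg]
    rw [Finset.sum_congr rfl hde, mul_sub]
    congr 1
    · ring
    · rw [Finset.mul_sum, Finset.mul_sum]
      exact Finset.sum_congr rfl fun k _ => by ring
  rw [← hsum]
  exact H

/-- a vector is a fixed point of the windowed DE update on the window
coordinates if and only if it is a stationary point of the window potential restricted to
the window coordinates (assuming ρ'(1−x_z) ≠ 0 throughout the window). -/
theorem fixedPoint_iff_stationary
    (L R : Polynomial ℝ)
    (hLcoeff : ∀ i, 0 ≤ L.coeff i) (hRcoeff : ∀ i, 0 ≤ R.coeff i)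
    (hL1 : L.eval 1 = 1) (hR1 : R.eval 1 = 1)
    (hL'pos : 0 < (Polynomial.derivative L).eval 1)
    (hR'pos : 0 < (Polynomial.derivative R).eval 1)
    (ε : ℝ) (hε0 : 0 ≤ ε) (hε1 : ε ≤ 1)
    (N w W : ℕ) (hw : 1 ≤ w) (hwW : w ≤ W) (hWN : W ≤ N)
    (c : ℕ) (hc1 : w ≤ c) (hc2 : c + W ≤ N + 1)
    (x : ℤ → ℝ)
    (hxin : ∀ z : ℤ, 1 ≤ z → z ≤ (N : ℤ) + (w : ℤ) - 1 → x z ∈ Set.Icc (0 : ℝ) 1)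
    (hxout : ∀ z : ℤ, ¬ (1 ≤ z ∧ z ≤ (N : ℤ) + (w : ℤ) - 1) → x z = 0)
    (hrho : ∀ z : ℤ, (c : ℤ) ≤ z → z ≤ (c : ℤ) + (W : ℤ) - 1 → rhoD R (1 - x z) ≠ 0) :
    (∀ z : ℤ, (c : ℤ) ≤ z → z ≤ (c : ℤ) + (W : ℤ) - 1 →
        x z = deUpdate L R ε N w W (c : ℤ) x z) ↔
    (∀ z : ℤ, (c : ℤ) ≤ z → z ≤ (c : ℤ) + (W : ℤ) - 1 →
        deriv (fun s : ℝ => windowU L R ε w W (c : ℤ) (Function.update x z s)) (x z) = 0) := by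
  have hc1' : (w : ℤ) ≤ (c : ℤ) := by exact_mod_cast hc1
  have hc2' : (c : ℤ) + (W : ℤ) - 1 ≤ (N : ℤ) := by
    have : (c : ℤ) + (W : ℤ) ≤ (N : ℤ) + 1 := by exact_mod_cast hc2
    omega
  constructor
  · intro hfix z hz1 hz2
    have hd := (hasDerivAt_windowU L R ε N w W (c : ℤ) hw hc1' hc2' x z hz1 hz2).deriv
    rw [hd, ← hfix z hz1 hz2, sub_self, mul_zero]
  · intro hst z hz1 hz2
    have hd := (hasDerivAt_windowU L R ε N w W (c : ℤ) hw hc1' hc2' x z hz1 hz2).deriv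
    have h0 := hst z hz1 hz2
    rw [hd] at h0
    rcases mul_eq_zero.mp h0 with h | h
    · exact absurd h (hrho z hz1 hz2)
    · exact sub_eq_zero.mp h

end SC
end
end

section
/- Assume all DE values lie in [0,1]. Then for every window index c with 2 ≤ c ≤ N−W+1 and every position z with c ≤ z ≤ c+W−2 (so that both z and z−1 belong to the previous window {c−1,…,c+W−2}), the initial values of the c-th window satisfy x_z^{(c,0)} − x_{z−1}^{(c,0)} = (1/w)·( ε_z λ(1 − (1/w)∑_{j=0}^{w−1} ρ(1 − x_{z+j}^{(c−1,T−1)})) − ε_{z−w} λ(1 − (1/w)∑_{j=0}^{w−1} ρ(1 − x_{z+j−w}^{(c−1,T−1)})) ) and in particular x_z^{(c,0)} − x_{z−1}^{(c,0)} ≤ ε/w. -/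
open Finset

noncomputable section

namespace SC

lemma eval_nonneg_of_coeff_nonneg (P : Polynomial ℝ) (h : ∀ i, 0 ≤ P.coeff i)
    {x : ℝ} (hx : 0 ≤ x) : 0 ≤ P.eval x := by
  rw [Polynomial.eval_eq_sum_range]
  exact Finset.sum_nonneg fun i _ => mul_nonneg (h i) (pow_nonneg hx i)

lemma eval_mono_of_coeff_nonneg (P : Polynomial ℝ) (h : ∀ i, 0 ≤ P.coeff i)
    {x y : ℝ} (hx : 0 ≤ x) (hxy : x ≤ y) : P.eval x ≤ P.eval y := by
  rw [Polynomial.eval_eq_sum_range, Polynomial.eval_eq_sum_range]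
  exact Finset.sum_le_sum fun i _ =>
    mul_le_mul_of_nonneg_left (pow_le_pow_left₀ hx hxy i) (h i)

lemma deriv_coeff_nonneg (P : Polynomial ℝ) (h : ∀ i, 0 ≤ P.coeff i) :
    ∀ i, 0 ≤ (Polynomial.derivative P).coeff i := by
  intro i
  rw [Polynomial.coeff_derivative]
  exact mul_nonneg (h (i + 1)) (by positivity)

lemma lam_mem (L : Polynomial ℝ) (h : ∀ i, 0 ≤ L.coeff i)
    (hpos : 0 < (Polynomial.derivative L).eval 1) {u : ℝ} (h0 : 0 ≤ u) (h1 : u ≤ 1) :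
    0 ≤ lam L u ∧ lam L u ≤ 1 := by
  constructor
  · exact div_nonneg (eval_nonneg_of_coeff_nonneg _ (deriv_coeff_nonneg _ h) h0) hpos.le
  · rw [lam, div_le_one hpos]
    exact eval_mono_of_coeff_nonneg _ (deriv_coeff_nonneg _ h) h0 h1

lemma rho_mem (R : Polynomial ℝ) (h : ∀ i, 0 ≤ R.coeff i)
    (hpos : 0 < (Polynomial.derivative R).eval 1) {u : ℝ} (h0 : 0 ≤ u) (h1 : u ≤ 1) :
    0 ≤ rho R u ∧ rho R u ≤ 1 :=
  lam_mem R h hpos h0 h1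

lemma telescope_sum (F : ℤ → ℝ) (z : ℤ) (w : ℕ) :
    ∑ k ∈ Finset.range w, F (z - (k : ℤ)) - ∑ k ∈ Finset.range w, F (z - 1 - (k : ℤ))
      = F z - F (z - (w : ℤ)) := by
  have h : ∀ k ∈ Finset.range w, F (z - 1 - (k : ℤ)) = F (z - ((k + 1 : ℕ) : ℤ)) := by
    intro k _; congr 1; push_cast; ring
  rw [Finset.sum_congr rfl h, ← Finset.sum_sub_distrib,
    Finset.sum_range_sub' (fun k : ℕ => F (z - (k : ℤ))) w]
  simp

lemma epsAt_nonneg (ε : ℝ) (hε : 0 ≤ ε) (N : ℕ) (z : ℤ) : 0 ≤ epsAt ε N z := by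
  unfold epsAt; split <;> simp [hε]

lemma epsAt_le (ε : ℝ) (hε : 0 ≤ ε) (N : ℕ) (z : ℤ) : epsAt ε N z ≤ ε := by
  unfold epsAt; split <;> simp [hε]

/-- telescoping formula for the initial gap in a window, and the resulting
bound `x_z^{(c,0)} − x_{z−1}^{(c,0)} ≤ ε/w`. -/
theorem initial_gap_formula
    (L R : Polynomial ℝ)
    (hLcoeff : ∀ i, 0 ≤ L.coeff i) (hRcoeff : ∀ i, 0 ≤ R.coeff i)
    (hL1 : L.eval 1 = 1) (hR1 : R.eval 1 = 1)
    (hL'pos : 0 < (Polynomial.derivative L).eval 1)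
    (hR'pos : 0 < (Polynomial.derivative R).eval 1)
    (ε : ℝ) (hε0 : 0 ≤ ε) (hε1 : ε ≤ 1)
    (N w W T : ℕ) (hw : 1 ≤ w) (hwW : w ≤ W) (hWN : W ≤ N) (hT : 1 ≤ T)
    -- the windowed-decoding DE solution
    (X : ℕ → ℕ → ℤ → ℝ)
    (hinit : ∀ z : ℤ, 1 ≤ z → z ≤ (N : ℤ) + (w : ℤ) - 1 → X 1 0 z = 1)
    (hout : ∀ c t : ℕ, ∀ z : ℤ, ¬ (1 ≤ z ∧ z ≤ (N : ℤ) + (w : ℤ) - 1) → X c t z = 0)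
    (hupd : ∀ c : ℕ, 1 ≤ c → c + W ≤ N + 1 → ∀ t : ℕ, t + 1 ≤ T →
      ∀ z : ℤ, 1 ≤ z → z ≤ (N : ℤ) + (w : ℤ) - 1 →
      X c (t + 1) z = deUpdate L R ε N w W (c : ℤ) (X c t) z)
    (hshiftwin : ∀ c : ℕ, 1 ≤ c → (c + 1) + W ≤ N + 1 → ∀ z : ℤ, X (c + 1) 0 z = X c T z)
    -- all DE values lie in [0,1]
    (hrange : ∀ c t : ℕ, ∀ z : ℤ, 0 ≤ X c t z ∧ X c t z ≤ 1) :
    ∀ c : ℕ, 2 ≤ c → c + W ≤ N + 1 → ∀ z : ℤ, (c : ℤ) ≤ z → z ≤ (c : ℤ) + (W : ℤ) - 2 →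
      (X c 0 z - X c 0 (z - 1)
        = (1 / (w : ℝ)) *
          (epsAt ε N z *
              lam L (1 - (1 / (w : ℝ)) * ∑ j ∈ Finset.range w,
                rho R (1 - X (c - 1) (T - 1) (z + (j : ℤ))))
            - epsAt ε N (z - (w : ℤ)) *
              lam L (1 - (1 / (w : ℝ)) * ∑ j ∈ Finset.range w,
                rho R (1 - X (c - 1) (T - 1) (z + (j : ℤ) - (w : ℤ)))))) ∧
      X c 0 z - X c 0 (z - 1) ≤ ε / (w : ℝ) := by
  intro c hc hcW z hz hz'
  obtain ⟨c', rfl⟩ : ∃ c', c = c' + 1 := ⟨c - 1, by omega⟩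
  obtain ⟨T', rfl⟩ : ∃ T', T = T' + 1 := ⟨T - 1, by omega⟩
  have hc' : 1 ≤ c' := by omega
  set Y : ℤ → ℝ := X c' T' with hY
  set F : ℤ → ℝ := fun m => epsAt ε N m *
    lam L (1 - (1 / (w : ℝ)) * ∑ j ∈ Finset.range w, rho R (1 - Y (m + (j : ℤ)))) with hF
  have hz1 : (1 : ℤ) ≤ z - 1 := by omega
  have hzN : z ≤ (N : ℤ) + (w : ℤ) - 1 := by omega
  have hzN' : z - 1 ≤ (N : ℤ) + (w : ℤ) - 1 := by omega
  have hwin : c' + W ≤ N + 1 := by omega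
  have key : ∀ z0 : ℤ, (c' : ℤ) ≤ z0 → z0 ≤ (c' : ℤ) + (W : ℤ) - 1 →
      (1 : ℤ) ≤ z0 → z0 ≤ (N : ℤ) + (w : ℤ) - 1 →
      X (c' + 1) 0 z0 = (1 / (w : ℝ)) * ∑ k ∈ Finset.range w, F (z0 - (k : ℤ)) := by
    intro z0 h1 h2 h3 h4
    rw [hshiftwin c' hc' hcW z0, hupd c' hc' hwin T' le_rfl z0 h3 h4,
      deUpdate, if_pos ⟨h1, h2⟩]
    congr 1
    refine Finset.sum_congr rfl fun k _ => ?_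
    have harg : ∀ j : ℕ, z0 + (j : ℤ) - (k : ℤ) = (z0 - (k : ℤ)) + (j : ℤ) := fun j => by ring
    simp only [hF, harg, hY]
  have eA : X (c' + 1) 0 z = (1 / (w : ℝ)) * ∑ k ∈ Finset.range w, F (z - (k : ℤ)) :=
    key z (by omega) (by push_cast; omega) (by omega) hzN
  have eB : X (c' + 1) 0 (z - 1) = (1 / (w : ℝ)) * ∑ k ∈ Finset.range w, F (z - 1 - (k : ℤ)) :=
    key (z - 1) (by omega) (by push_cast; omega) hz1 hzN'
  have hdiff : X (c' + 1) 0 z - X (c' + 1) 0 (z - 1)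
      = (1 / (w : ℝ)) * (F z - F (z - (w : ℤ))) := by
    rw [eA, eB, ← mul_sub, telescope_sum]
  constructor
  · rw [hdiff]
    simp only [Nat.add_sub_cancel, hF, hY]
    congr 1
    have harg : ∀ j : ℕ, z - (w : ℤ) + (j : ℤ) = z + (j : ℤ) - (w : ℤ) := fun j => by ring
    simp only [harg]
  · rw [hdiff]
    have hwR : (0 : ℝ) < (w : ℝ) := by exact_mod_cast hw
    have hFub : F z ≤ ε := by
      have hargmem : 0 ≤ 1 - (1 / (w : ℝ)) * ∑ j ∈ Finset.range w, rho R (1 - Y (z + (j : ℤ)))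
          ∧ 1 - (1 / (w : ℝ)) * ∑ j ∈ Finset.range w, rho R (1 - Y (z + (j : ℤ))) ≤ 1 := by
        have hterm : ∀ j ∈ Finset.range w,
            0 ≤ rho R (1 - Y (z + (j : ℤ))) ∧ rho R (1 - Y (z + (j : ℤ))) ≤ 1 := by
          intro j _
          have := hrange c' T' (z + (j : ℤ))
          exact rho_mem R hRcoeff hR'pos (by linarith [this.2]) (by linarith [this.1])
        have hS0 : 0 ≤ ∑ j ∈ Finset.range w, rho R (1 - Y (z + (j : ℤ))) :=
          Finset.sum_nonneg fun j hj => (hterm j hj).1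
        have hSw : ∑ j ∈ Finset.range w, rho R (1 - Y (z + (j : ℤ))) ≤ (w : ℝ) := by
          calc ∑ j ∈ Finset.range w, rho R (1 - Y (z + (j : ℤ)))
              ≤ ∑ _j ∈ Finset.range w, (1 : ℝ) :=
                Finset.sum_le_sum fun j hj => (hterm j hj).2
            _ = (w : ℝ) := by simp
        constructor
        · have : (1 / (w : ℝ)) * ∑ j ∈ Finset.range w, rho R (1 - Y (z + (j : ℤ))) ≤ 1 := by
            rw [one_div, inv_mul_le_iff₀ hwR]; simpa using hSw
          linarith
        · nlinarith [mul_nonneg (le_of_lt (by positivity : (0:ℝ) < 1 / (w:ℝ))) hS0]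
      obtain ⟨hl0, hl1⟩ := lam_mem L hLcoeff hL'pos hargmem.1 hargmem.2
      calc F z ≤ epsAt ε N z * 1 := by
            exact mul_le_mul_of_nonneg_left hl1 (epsAt_nonneg ε hε0 N z)
        _ = epsAt ε N z := mul_one _
        _ ≤ ε := epsAt_le ε hε0 N z
    have hFlb : 0 ≤ F (z - (w : ℤ)) := by
      have hterm : ∀ j ∈ Finset.range w,
          0 ≤ rho R (1 - Y (z - (w : ℤ) + (j : ℤ))) ∧
            rho R (1 - Y (z - (w : ℤ) + (j : ℤ))) ≤ 1 := by
        intro j _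
        have := hrange c' T' (z - (w : ℤ) + (j : ℤ))
        exact rho_mem R hRcoeff hR'pos (by linarith [this.2]) (by linarith [this.1])
      have hS0 : 0 ≤ ∑ j ∈ Finset.range w, rho R (1 - Y (z - (w : ℤ) + (j : ℤ))) :=
        Finset.sum_nonneg fun j hj => (hterm j hj).1
      have hSw : ∑ j ∈ Finset.range w, rho R (1 - Y (z - (w : ℤ) + (j : ℤ))) ≤ (w : ℝ) := by
        calc ∑ j ∈ Finset.range w, rho R (1 - Y (z - (w : ℤ) + (j : ℤ)))
            ≤ ∑ _j ∈ Finset.range w, (1 : ℝ) := Finset.sum_le_sum fun j hj => (hterm j hj).2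
          _ = (w : ℝ) := by simp
      have h0 : 0 ≤ 1 - (1 / (w : ℝ)) *
          ∑ j ∈ Finset.range w, rho R (1 - Y (z - (w : ℤ) + (j : ℤ))) := by
        have : (1 / (w : ℝ)) *
            ∑ j ∈ Finset.range w, rho R (1 - Y (z - (w : ℤ) + (j : ℤ))) ≤ 1 := by
          rw [one_div, inv_mul_le_iff₀ hwR]; simpa using hSw
        linarith
      have h1 : 1 - (1 / (w : ℝ)) *
          ∑ j ∈ Finset.range w, rho R (1 - Y (z - (w : ℤ) + (j : ℤ))) ≤ 1 := by
        nlinarith [mul_nonneg (le_of_lt (by positivity : (0:ℝ) < 1 / (w:ℝ))) hS0]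
      exact mul_nonneg (epsAt_nonneg ε hε0 N _) (lam_mem L hLcoeff hL'pos h0 h1).1
    calc (1 / (w : ℝ)) * (F z - F (z - (w : ℤ))) ≤ (1 / (w : ℝ)) * ε := by
          apply mul_le_mul_of_nonneg_left _ (by positivity)
          linarith
      _ = ε / (w : ℝ) := by ring

end SC
end
end

section
/- Let g : [a,b] → ℝ be differentiable with derivative g' that is D-Lipschitz on [a,b] for some D > 0, and suppose g is convex on [a,b] (equivalently g' is nondecreasing on [a,b]). Then for every partition a = g_0 ≤ g_1 ≤ … ≤ g_m = b, ∑_{i=1}^{m} g'(g_i)·(g_i − g_{i−1}) ≥ g(b) − g(a) + (1/(2D))·∑_{i=1}^{m} (g'(g_i) − g'(g_{i−1}))² ≥ g(b) − g(a) + (g'(b) − g'(a))² / (2 D m). -/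
open Finset

lemma conv_step (a b : ℝ) (g g' : ℝ → ℝ)
    (hderiv : ∀ x ∈ Set.Icc a b, HasDerivAt g (g' x) x)
    (hmono : ∀ x ∈ Set.Icc a b, ∀ y ∈ Set.Icc a b, x ≤ y → g' x ≤ g' y)
    (u v : ℝ) (hu : u ∈ Set.Icc a b) (hv : v ∈ Set.Icc a b) (huv : u ≤ v) :
    g v - g u ≤ g' v * (v - u) := by
  set h : ℝ → ℝ := fun t => g' v * t - g t with hh
  have hsub : Set.Icc u v ⊆ Set.Icc a b := Set.Icc_subset_Icc hu.1 hv.2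
  have hder : ∀ t ∈ Set.Icc u v, HasDerivAt h (g' v - g' t) t := fun t ht =>
    ((hasDerivAt_id t).const_mul (g' v)).sub (hderiv t (hsub ht)) |>.congr_deriv (by ring)
  have hm : MonotoneOn h (Set.Icc u v) := by
    apply monotoneOn_of_deriv_nonneg (convex_Icc u v)
    · exact fun t ht => (hder t ht).continuousAt.continuousWithinAt
    · exact fun t ht => ((hder t (interior_subset ht)).differentiableAt).differentiableWithinAt
    · intro t ht
      rw [(hder t (interior_subset ht)).deriv]
      have ht' := interior_subset ht
      exact sub_nonneg.2 (hmono t (hsub ht') v hv ht'.2)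
  have := hm (Set.left_mem_Icc.2 huv) (Set.right_mem_Icc.2 huv) huv
  simp only [hh] at this
  nlinarith [this]

lemma lip_step (a b D : ℝ) (hD : 0 < D) (g g' : ℝ → ℝ)
    (hderiv : ∀ x ∈ Set.Icc a b, HasDerivAt g (g' x) x)
    (hlip : ∀ x ∈ Set.Icc a b, ∀ y ∈ Set.Icc a b, |g' x - g' y| ≤ D * |x - y|)
    (u v : ℝ) (hu : u ∈ Set.Icc a b) (hv : v ∈ Set.Icc a b) (huv : u ≤ v) :
    g v - g u ≤ g' u * (v - u) + D * (v - u) ^ 2 / 2 := by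
  set h : ℝ → ℝ := fun t => g t - g' u * t - D * (t - u) ^ 2 / 2 with hh
  have hsub : Set.Icc u v ⊆ Set.Icc a b := Set.Icc_subset_Icc hu.1 hv.2
  have hder : ∀ t ∈ Set.Icc u v, HasDerivAt h (g' t - g' u - D * (t - u)) t := by
    intro t ht
    have h1 : HasDerivAt (fun t : ℝ => D * (t - u) ^ 2 / 2) (D * (t - u)) t := by
      have : HasDerivAt (fun t : ℝ => (t - u) ^ 2) (2 * (t - u)) t := by
        simpa using ((hasDerivAt_id t).sub_const u).fun_pow 2
      have h2 := (this.const_mul D).div_const 2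
      exact h2.congr_deriv (by ring)
    exact ((hderiv t (hsub ht)).sub ((hasDerivAt_id t).const_mul (g' u))).sub h1
      |>.congr_deriv (by ring)
  have hm : AntitoneOn h (Set.Icc u v) := by
    apply antitoneOn_of_deriv_nonpos (convex_Icc u v)
    · exact fun t ht => (hder t ht).continuousAt.continuousWithinAt
    · exact fun t ht => ((hder t (interior_subset ht)).differentiableAt).differentiableWithinAt
    · intro t ht
      rw [(hder t (interior_subset ht)).deriv]
      have ht' := interior_subset ht
      have := hlip t (hsub ht') u hu
      rw [abs_of_nonneg (by linarith [ht'.1] : (0:ℝ) ≤ t - u)] at this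
      have h2 := le_abs_self (g' t - g' u)
      linarith
  have := hm (Set.left_mem_Icc.2 huv) (Set.right_mem_Icc.2 huv) huv
  simp only [hh] at this
  nlinarith [this]

lemma key_step (a b D : ℝ) (hD : 0 < D) (g g' : ℝ → ℝ)
    (hderiv : ∀ x ∈ Set.Icc a b, HasDerivAt g (g' x) x)
    (hlip : ∀ x ∈ Set.Icc a b, ∀ y ∈ Set.Icc a b, |g' x - g' y| ≤ D * |x - y|)
    (hmono : ∀ x ∈ Set.Icc a b, ∀ y ∈ Set.Icc a b, x ≤ y → g' x ≤ g' y)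
    (u v : ℝ) (hu : u ∈ Set.Icc a b) (hv : v ∈ Set.Icc a b) (huv : u ≤ v) :
    g' v * (v - u) ≥ g v - g u + (g' v - g' u) ^ 2 / (2 * D) := by
  set Δ := g' v - g' u with hΔ
  clear_value Δ
  have hΔ0 : 0 ≤ Δ := by rw [hΔ]; exact sub_nonneg.2 (hmono u hu v hv huv)
  have hΔle : Δ ≤ D * (v - u) := by
    rw [hΔ]
    have := hlip v hv u hu
    rw [abs_of_nonneg (by rw [hΔ] at hΔ0; exact hΔ0), abs_of_nonneg (by linarith : (0:ℝ) ≤ v - u)] at this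
    exact this
  set c := u + Δ / D with hc
  clear_value c
  have hcu : u ≤ c := by
    have : 0 ≤ Δ / D := div_nonneg hΔ0 hD.le
    linarith
  have hcv : c ≤ v := by
    rw [hc]
    have : Δ / D ≤ v - u := (div_le_iff₀' hD).2 hΔle
    linarith
  have hcmem : c ∈ Set.Icc a b := ⟨le_trans hu.1 hcu, le_trans hcv hv.2⟩
  have hB := lip_step a b D hD g g' hderiv hlip u c hu hcmem hcu
  have hA := conv_step a b g g' hderiv hmono c v hcmem hv hcv
  have hcu' : c - u = Δ / D := by rw [hc]; ring
  have hDD : D * (Δ / D) = Δ := by field_simp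
  rw [hcu'] at hB
  have h1 : g v - g u ≤ g' v * (v - c) + g' u * (Δ / D) + D * (Δ / D) ^ 2 / 2 := by linarith
  have h2 : D * (Δ / D) ^ 2 / 2 = Δ ^ 2 / (2 * D) := by field_simp
  have h3 : g' v * (v - c) = g' v * (v - u) - g' v * (Δ / D) := by rw [hc]; ring
  have h4 : g' v * (Δ / D) - g' u * (Δ / D) = Δ ^ 2 / D := by
    rw [← sub_mul, ← hΔ]; field_simp
  have h5 : Δ ^ 2 / D - Δ ^ 2 / (2 * D) = Δ ^ 2 / (2 * D) := by field_simp; ring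
  rw [h2, h3] at h1
  linarith

/-- generic partition lemma in a convex region. For a differentiable `g` on
`[a,b]` whose derivative `g'` is `D`-Lipschitz and nondecreasing on `[a,b]`, the right Riemann
sum of `g'` over any partition dominates `g(b) − g(a)` plus `(1/(2D))` times the sum of squared
derivative increments, which in turn dominates `g(b) − g(a) + (g'(b) − g'(a))²/(2Dm)`. -/
theorem partition_lemma_convex
    (a b D : ℝ) (hab : a ≤ b) (hD : 0 < D)
    (g g' : ℝ → ℝ)
    (hderiv : ∀ x ∈ Set.Icc a b, HasDerivAt g (g' x) x)
    (hlip : ∀ x ∈ Set.Icc a b, ∀ y ∈ Set.Icc a b, |g' x - g' y| ≤ D * |x - y|)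
    (hmono : ∀ x ∈ Set.Icc a b, ∀ y ∈ Set.Icc a b, x ≤ y → g' x ≤ g' y)
    (m : ℕ) (p : ℕ → ℝ) (hp0 : p 0 = a) (hpm : p m = b)
    (hpmono : ∀ i : ℕ, i < m → p i ≤ p (i + 1)) :
    (∑ i ∈ Finset.range m, g' (p (i + 1)) * (p (i + 1) - p i)
      ≥ g b - g a + (1 / (2 * D)) * ∑ i ∈ Finset.range m, (g' (p (i + 1)) - g' (p i)) ^ 2) ∧
    (g b - g a + (1 / (2 * D)) * ∑ i ∈ Finset.range m, (g' (p (i + 1)) - g' (p i)) ^ 2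
      ≥ g b - g a + (g' b - g' a) ^ 2 / (2 * D * (m : ℝ))) := by
  -- p is monotone on {0..m}
  have pmono : ∀ i j : ℕ, i ≤ j → j ≤ m → p i ≤ p j := by
    intro i j hij hjm
    induction j with
    | zero => simp_all
    | succ k ih =>
      rcases Nat.lt_or_ge i (k+1) with h | h
      · have := hpmono k (by omega)
        exact le_trans (ih (by omega) (by omega)) this
      · have : i = k + 1 := by omega
        simp [this]
  have pmem : ∀ i : ℕ, i ≤ m → p i ∈ Set.Icc a b := by
    intro i hi
    exact ⟨hp0 ▸ pmono 0 i (Nat.zero_le i) hi, hpm ▸ pmono i m hi le_rfl⟩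
  have keyi : ∀ i ∈ Finset.range m,
      g' (p (i+1)) * (p (i+1) - p i) ≥
        (g (p (i+1)) - g (p i)) + (g' (p (i+1)) - g' (p i)) ^ 2 / (2 * D) := by
    intro i hi
    rw [Finset.mem_range] at hi
    exact key_step a b D hD g g' hderiv hlip hmono (p i) (p (i+1))
      (pmem i (by omega)) (pmem (i+1) (by omega)) (hpmono i hi)
  have htel : ∑ i ∈ Finset.range m, (g (p (i+1)) - g (p i)) = g b - g a := by
    rw [Finset.sum_range_sub (fun i => g (p i)), hp0, hpm]
  have htel' : ∑ i ∈ Finset.range m, (g' (p (i+1)) - g' (p i)) = g' b - g' a := by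
    rw [Finset.sum_range_sub (fun i => g' (p i)), hp0, hpm]
  constructor
  · have := Finset.sum_le_sum keyi
    have hq : ∑ i ∈ Finset.range m, ((g (p (i+1)) - g (p i)) + (g' (p (i+1)) - g' (p i)) ^ 2 / (2 * D))
        = (g b - g a) + (1 / (2 * D)) * ∑ i ∈ Finset.range m, (g' (p (i + 1)) - g' (p i)) ^ 2 := by
      rw [Finset.sum_add_distrib, htel, Finset.mul_sum]
      congr 1
      exact Finset.sum_congr rfl fun i _ => by ring
    linarith [hq ▸ this]
  · rcases Nat.eq_zero_or_pos m with hm | hm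
    · subst hm
      simp
    · have hcs : (g' b - g' a) ^ 2 ≤ (m : ℝ) * ∑ i ∈ Finset.range m, (g' (p (i+1)) - g' (p i)) ^ 2 := by
        have := sq_sum_le_card_mul_sum_sq (s := Finset.range m)
          (f := fun i => g' (p (i+1)) - g' (p i))
        simpa [htel'] using this
      have hm' : (0:ℝ) < m := by exact_mod_cast hm
      have h1 : (g' b - g' a) ^ 2 / (2 * D * m)
          ≤ (1 / (2 * D)) * ∑ i ∈ Finset.range m, (g' (p (i+1)) - g' (p i)) ^ 2 := by
        rw [div_le_iff₀ (by positivity)]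
        calc (g' b - g' a) ^ 2 ≤ (m : ℝ) * ∑ i ∈ Finset.range m, (g' (p (i+1)) - g' (p i)) ^ 2 := hcs
          _ = 1 / (2 * D) * (∑ i ∈ Finset.range m, (g' (p (i+1)) - g' (p i)) ^ 2) * (2 * D * ↑m) := by
              field_simp
      linarith
end
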